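/- Let n be a positive integer, v ∈ ℝⁿ with v ≠ 0, σ > 0, ε > 0 and δ ≥ 0. Let Z be a standard one-dimensional Gaussian random variable (mean 0, variance 1). If Pr[|Z| > εσ/‖v‖ − ‖v‖/(2σ)] ≤ δ, then for every Borel set S ⊆ ℝⁿ, N(0, σ²I)(S) ≤ e^ε · N(−v, σ²I)(S) + δ. -/

import Mathlib

open MeasureTheory ProbabilityTheory
open scoped NNReal ENNReal

/-- The Gaussian probability measure `N(m, σ²I)` on `ℝⁿ`, realized as the product over
the `n` coordinates of one-dimensional Gaussian measures with variance `v` centered at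
the coordinates of the mean `m`. -/
noncomputable def gaussianPi {n : ℕ} (m : EuclideanSpace ℝ (Fin n)) (v : ℝ≥0) :
    Measure (EuclideanSpace ℝ (Fin n)) :=
  (Measure.pi fun i => gaussianReal (m i) v).map (MeasurableEquiv.toLp 2 (Fin n → ℝ))

open Real

theorem lintegral_pi_prod {n : ℕ} (μ : Measure ℝ) [SigmaFinite μ] (f : Fin n → ℝ → ℝ≥0∞)
    (hf : ∀ i, Measurable (f i)) :
    ∫⁻ x : Fin n → ℝ, ∏ i, f i (x i) ∂(Measure.pi fun _ => μ) = ∏ i, ∫⁻ y, f i y ∂μ := by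
  induction n with
  | zero => simp
  | succ m ih =>
    have hmeas : Measurable fun x : Fin (m+1) → ℝ => ∏ i, f i (x i) :=
      Finset.measurable_prod _ fun i _ => (hf i).comp (measurable_pi_apply i)
    rw [← ((measurePreserving_piFinSuccAbove (fun _ : Fin (m+1) => μ) 0).symm).lintegral_comp hmeas]
    have : ∀ p : ℝ × (Fin m → ℝ),
        (∏ i, f i (((MeasurableEquiv.piFinSuccAbove (fun _ : Fin (m+1) => ℝ) 0).symm p) i))
        = f 0 p.1 * ∏ i, f i.succ (p.2 i) := by
      intro p
      rw [Fin.prod_univ_succ]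
      simp [MeasurableEquiv.piFinSuccAbove_symm_apply, Fin.succAbove]
    simp_rw [this]
    have h2 := lintegral_prod_mul (μ := μ) (ν := Measure.pi fun _ : Fin m => μ)
      (f := f 0) (g := fun y : Fin m → ℝ => ∏ i : Fin m, f (Fin.succ i) (y i)) (hf 0).aemeasurable
      (Finset.measurable_prod _ fun i _ => (hf i.succ).comp (measurable_pi_apply i)).aemeasurable
    rw [h2, ih _ (fun i => hf i.succ), Fin.prod_univ_succ]

theorem pi_withDensity {n : ℕ} (f : Fin n → ℝ → ℝ≥0∞) (hf : ∀ i, Measurable (f i))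
    (hsf : ∀ i, SigmaFinite ((volume : Measure ℝ).withDensity (f i))) :
    (Measure.pi fun _ : Fin n => (volume : Measure ℝ)).withDensity (fun x => ∏ i, f i (x i)) =
      Measure.pi (fun i => (volume : Measure ℝ).withDensity (f i)) := by
  haveI : ∀ i, SigmaFinite ((volume : Measure ℝ).withDensity (f i)) := hsf
  refine (Measure.pi_eq fun s hs => ?_).symm
  have hprod : Measurable fun x : Fin n → ℝ => ∏ i, f i (x i) :=
    Finset.measurable_prod _ fun i _ => (hf i).comp (measurable_pi_apply i)
  rw [withDensity_apply _ (MeasurableSet.univ_pi hs), ← lintegral_indicator (MeasurableSet.univ_pi hs)]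
  have : ∀ x : Fin n → ℝ, (Set.univ.pi s).indicator (fun x => ∏ i, f i (x i)) x
      = ∏ i, (s i).indicator (f i) (x i) := by
    intro x
    by_cases hx : x ∈ Set.univ.pi s
    · rw [Set.indicator_of_mem hx]
      exact Finset.prod_congr rfl fun i _ => (Set.indicator_of_mem (hx i (Set.mem_univ i)) _).symm
    · rw [Set.indicator_of_notMem hx]
      rw [Set.mem_univ_pi] at hx
      push_neg at hx
      obtain ⟨i, hi⟩ := hx
      exact (Finset.prod_eq_zero (Finset.mem_univ i) (Set.indicator_of_notMem hi _)).symm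
  simp_rw [this]
  rw [lintegral_pi_prod volume _ (fun i => (hf i).indicator (hs i))]
  exact Finset.prod_congr rfl fun i _ => by
    rw [lintegral_indicator (hs i), ← withDensity_apply _ (hs i)]

theorem volume_euclidean_eq_pi {n : ℕ} :
    (volume : Measure (EuclideanSpace ℝ (Fin n))) =
      (Measure.pi (fun _ : Fin n => volume)).map (MeasurableEquiv.toLp 2 (Fin n → ℝ)) := by
  have h := MeasurePreserving.symm _ (EuclideanSpace.volume_preserving_symm_measurableEquiv_toLp (Fin n))
  rw [← h.map_eq]
  ext s hs
  rw [MeasurableEquiv.map_apply, MeasurableEquiv.map_apply, volume_pi]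
  rfl

theorem prod_gaussianPDFReal {n : ℕ} (w : ℝ≥0) (m x : EuclideanSpace ℝ (Fin n)) :
    ∏ i, gaussianPDFReal (m i) w (x i)
      = ((Real.sqrt (2 * π * w))⁻¹) ^ n * Real.exp (-‖x - m‖ ^ 2 / (2 * w)) := by
  simp_rw [gaussianPDFReal_def]
  rw [Finset.prod_mul_distrib, Finset.prod_const, ← Real.exp_sum, Finset.card_univ,
    Fintype.card_fin]
  congr 1
  have hnorm : ‖x - m‖ ^ 2 = ∑ i, (x i - m i) ^ 2 := by
    rw [EuclideanSpace.norm_eq, Real.sq_sqrt (by positivity)]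
    simp [Real.norm_eq_abs, sq_abs]
  rw [hnorm, ← Finset.sum_div, ← Finset.sum_neg_distrib]

theorem gaussianPi_eq_withDensity {n : ℕ} (m : EuclideanSpace ℝ (Fin n)) {w : ℝ≥0} (hw : w ≠ 0) :
    gaussianPi m w = (volume : Measure (EuclideanSpace ℝ (Fin n))).withDensity
      (fun x => ENNReal.ofReal
        (((Real.sqrt (2 * π * w))⁻¹) ^ n * Real.exp (-‖x - m‖ ^ 2 / (2 * w)))) := by
  have h1 : gaussianPi m w
      = (Measure.pi (fun i => (volume : Measure ℝ).withDensity (gaussianPDF (m i) w))).map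
          (MeasurableEquiv.toLp 2 (Fin n → ℝ)) := by
    unfold gaussianPi
    congr 2
    funext i
    exact gaussianReal_of_var_ne_zero _ hw
  have h2 := pi_withDensity (fun i => gaussianPDF (m i) w)
    (fun i => measurable_gaussianPDF _ _)
    (fun i => by rw [← gaussianReal_of_var_ne_zero _ hw]; infer_instance)
  rw [h1, ← h2, volume_euclidean_eq_pi]
  ext s hs
  rw [MeasurableEquiv.map_apply, withDensity_apply _ (hs.preimage (MeasurableEquiv.measurable _)),
    withDensity_apply _ hs, MeasurableEquiv.restrict_map, lintegral_map_equiv]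
  apply lintegral_congr
  intro x
  refine (ENNReal.ofReal_prod_of_nonneg fun i _ => gaussianPDFReal_nonneg _ _ _).symm.trans ?_
  congr 1
  exact prod_gaussianPDFReal w m _

/-- cylinder sets -/
theorem gaussianPi_cylinder {n : ℕ} (m : EuclideanSpace ℝ (Fin n)) (w : ℝ≥0) (j : Fin n)
    (A : Set ℝ) (hA : MeasurableSet A) :
    gaussianPi m w {x : EuclideanSpace ℝ (Fin n) | x j ∈ A} = gaussianReal (m j) w A := by
  classical
  have hset : (MeasurableEquiv.toLp 2 (Fin n → ℝ)) ⁻¹' {x : EuclideanSpace ℝ (Fin n) | x j ∈ A}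
      = Set.pi Set.univ (Function.update (fun _ : Fin n => (Set.univ : Set ℝ)) j A) := by
    ext x
    simp only [Set.mem_preimage, Set.mem_setOf_eq, Set.mem_univ_pi]
    constructor
    · intro hx i
      rcases eq_or_ne i j with rfl | hij
      · simpa using hx
      · simp [Function.update_of_ne hij]
    · intro hx
      have := hx j
      simpa using this
  unfold gaussianPi
  rw [MeasurableEquiv.map_apply, hset]
  erw [Measure.pi_pi]
  rw [Finset.prod_eq_single j]
  · simp
  · intro i _ hij
    simp [Function.update_of_ne hij]
  · simp


/-- **Reduction of the `(ε,δ)` inequality to a standard Gaussian tail bound** (from the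
proof of Proposition 1).  For `v ≠ 0`, `σ > 0`, `ε > 0`, `δ ≥ 0` and `Z` a standard
Gaussian, if `Pr[|Z| > εσ/‖v‖ − ‖v‖/(2σ)] ≤ δ`, then for every Borel set `S`,
`N(0,σ²I)(S) ≤ e^ε · N(−v,σ²I)(S) + δ`. -/
theorem gaussian_tail_bound_implies_dp
    {n : ℕ} (hn : 0 < n) (v : EuclideanSpace ℝ (Fin n)) (hv : v ≠ 0)
    (σ ε δ : ℝ) (hσ : 0 < σ) (hε : 0 < ε) (hδ : 0 ≤ δ)
    (htail : gaussianReal 0 1 {z : ℝ | |z| > ε * σ / ‖v‖ - ‖v‖ / (2 * σ)} ≤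
      ENNReal.ofReal δ) :
    ∀ S : Set (EuclideanSpace ℝ (Fin n)), MeasurableSet S →
      gaussianPi (0 : EuclideanSpace ℝ (Fin n)) (Real.toNNReal (σ ^ 2)) S ≤
        ENNReal.ofReal (Real.exp ε) * gaussianPi (-v) (Real.toNNReal (σ ^ 2)) S +
          ENNReal.ofReal δ := by
  classical
  intro S hS
  set w : ℝ≥0 := Real.toNNReal (σ ^ 2) with hw_def
  have hσ2 : (0:ℝ) < σ ^ 2 := by positivity
  have hwr : (w : ℝ) = σ ^ 2 := Real.coe_toNNReal _ hσ2.le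
  have hw : w ≠ 0 := by
    intro h
    rw [h] at hwr
    simp only [NNReal.coe_zero] at hwr
    exact hσ2.ne' hwr.symm
  have hvn : (0:ℝ) < ‖v‖ := norm_pos_iff.mpr hv
  set c : ℝ := ((Real.sqrt (2 * π * w))⁻¹) ^ n with hc_def
  have hc : 0 ≤ c := by positivity
  set g : EuclideanSpace ℝ (Fin n) → EuclideanSpace ℝ (Fin n) → ℝ≥0∞ :=
    fun m x => ENNReal.ofReal (c * Real.exp (-‖x - m‖ ^ 2 / (2 * w))) with hg_def
  have hgmeas : ∀ m : EuclideanSpace ℝ (Fin n), Measurable (g m) := by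
    intro m
    apply Measurable.ennreal_ofReal
    fun_prop
  have hgdens : ∀ m : EuclideanSpace ℝ (Fin n),
      gaussianPi m w = (volume : Measure (EuclideanSpace ℝ (Fin n))).withDensity (g m) :=
    fun m => gaussianPi_eq_withDensity m hw
  set G : Set (EuclideanSpace ℝ (Fin n)) :=
    {x : EuclideanSpace ℝ (Fin n) | |(inner ℝ v x : ℝ) + ‖v‖^2/2| ≤ ε * σ^2} with hG_def
  have hinnercont : Continuous fun x : EuclideanSpace ℝ (Fin n) => (inner ℝ v x : ℝ) :=
    continuous_const.inner continuous_id
  have hGmeas : MeasurableSet G :=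
    measurableSet_le ((hinnercont.add continuous_const).abs.measurable) measurable_const
  -- good part
  have hgood : gaussianPi (0 : EuclideanSpace ℝ (Fin n)) w (S ∩ G) ≤
      ENNReal.ofReal (Real.exp ε) * gaussianPi (-v) w (S ∩ G) := by
    have hmg : MeasurableSet (S ∩ G) := hS.inter hGmeas
    rw [hgdens (0 : EuclideanSpace ℝ (Fin n)), hgdens (-v), withDensity_apply _ hmg,
      withDensity_apply _ hmg, ← lintegral_const_mul _ (hgmeas (-v))]
    refine setLIntegral_mono ((hgmeas (-v)).const_mul _) ?_
    intro x hx
    have hxG : |(inner ℝ v x : ℝ) + ‖v‖^2/2| ≤ ε * σ^2 := hx.2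
    rw [hg_def]
    simp only
    rw [← ENNReal.ofReal_mul (Real.exp_nonneg ε)]
    apply ENNReal.ofReal_le_ofReal
    have hxv : ‖x - -v‖ ^ 2 = ‖x - 0‖ ^ 2 + 2 * (inner ℝ x v : ℝ) + ‖v‖ ^ 2 := by
      rw [sub_neg_eq_add, sub_zero]
      exact norm_add_sq_real x v
    have hcomm : (inner ℝ v x : ℝ) = (inner ℝ x v : ℝ) := real_inner_comm x v
    have hub : (inner ℝ v x : ℝ) + ‖v‖^2/2 ≤ ε * σ^2 := (abs_le.mp hxG).2
    have hexp : Real.exp (-‖x - 0‖ ^ 2 / (2 * w)) ≤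
        Real.exp ε * Real.exp (-‖x - -v‖ ^ 2 / (2 * w)) := by
      rw [← Real.exp_add, Real.exp_le_exp, hwr, hxv, ← hcomm]
      have hexpand : (‖x - 0‖ ^ 2 + 2 * (inner ℝ v x : ℝ) + ‖v‖ ^ 2) / (2 * σ^2)
          = ‖x - 0‖ ^ 2 / (2 * σ^2) + (2 * (inner ℝ v x : ℝ) + ‖v‖ ^ 2) / (2 * σ^2) := by
        ring
      have hkey : (2 * (inner ℝ v x : ℝ) + ‖v‖ ^ 2) / (2 * σ^2) ≤ ε := by
        rw [div_le_iff₀ (by positivity)]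
        nlinarith
      rw [neg_div, neg_div, hexpand]
      linarith
    calc c * Real.exp (-‖x - 0‖ ^ 2 / (2 * w))
        ≤ c * (Real.exp ε * Real.exp (-‖x - -v‖ ^ 2 / (2 * w))) :=
          mul_le_mul_of_nonneg_left hexp hc
      _ = Real.exp ε * (c * Real.exp (-‖x - -v‖ ^ 2 / (2 * w))) := by ring
  -- bad part
  set Bad : Set (EuclideanSpace ℝ (Fin n)) :=
    {x : EuclideanSpace ℝ (Fin n) | ε*σ^2 - ‖v‖^2/2 < |(inner ℝ v x : ℝ)|} with hBad_def
  have hBadmeas : MeasurableSet Bad :=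
    measurableSet_lt measurable_const hinnercont.abs.measurable
  have hsub : S \ G ⊆ Bad := by
    intro x hx
    have hxG : ¬ (|(inner ℝ v x : ℝ) + ‖v‖^2/2| ≤ ε * σ^2) := hx.2
    push_neg at hxG
    have htri : |(inner ℝ v x : ℝ) + ‖v‖^2/2| ≤ |(inner ℝ v x : ℝ)| + ‖v‖^2/2 := by
      calc |(inner ℝ v x : ℝ) + ‖v‖^2/2| ≤ |(inner ℝ v x : ℝ)| + |‖v‖^2/2| := abs_add_le _ _
        _ = |(inner ℝ v x : ℝ)| + ‖v‖^2/2 := by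
          rw [abs_of_nonneg (show (0:ℝ) ≤ ‖v‖^2/2 by positivity)]
    simp only [hBad_def, Set.mem_setOf_eq]
    linarith
  have hbad : gaussianPi (0 : EuclideanSpace ℝ (Fin n)) w Bad ≤ ENNReal.ofReal δ := by
    set j₀ : Fin n := ⟨0, hn⟩
    set u : EuclideanSpace ℝ (Fin n) := ‖v‖⁻¹ • v with hu_def
    have hu_norm : ‖u‖ = 1 := by
      rw [hu_def, norm_smul, norm_inv, norm_norm, inv_mul_cancel₀ hvn.ne']
    have hortho : Orthonormal ℝ
        (({j₀} : Set (Fin n)).restrict (fun _ : Fin n => u)) := by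
      constructor
      · intro i
        exact hu_norm
      · intro i j hij
        exact absurd (Subtype.ext (by
          have hi := i.2
          have hj := j.2
          simp only [Set.mem_singleton_iff] at hi hj
          rw [hi, hj])) hij
    obtain ⟨b, hb⟩ := hortho.exists_orthonormalBasis_extension_of_card_eq
      (by simp [finrank_euclideanSpace_fin])
    have hbj : b j₀ = u := hb j₀ rfl
    have hkey : ∀ y : EuclideanSpace ℝ (Fin n), (inner ℝ v (b.repr.symm y) : ℝ) = ‖v‖ * y j₀ := by
      intro y
      have hvu : v = ‖v‖ • u := by
        rw [hu_def, smul_smul, mul_inv_cancel₀ hvn.ne', one_smul]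
      conv_lhs => rw [hvu]
      rw [real_inner_smul_left]
      congr 1
      rw [← hbj, ← OrthonormalBasis.repr_apply_apply, LinearIsometryEquiv.apply_symm_apply]
    set A : Set ℝ := {s : ℝ | ε*σ^2 - ‖v‖^2/2 < ‖v‖ * |s|} with hA_def
    have hAmeas : MeasurableSet A :=
      measurableSet_lt measurable_const (measurable_abs.const_mul _)
    have hpre : MeasurableSet ((fun y : EuclideanSpace ℝ (Fin n) => y j₀) ⁻¹' A) :=
      ((measurable_pi_apply j₀).comp (WithLp.measurable_ofLp 2 (Fin n → ℝ))) hAmeas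
    have hstep1 : gaussianPi (0 : EuclideanSpace ℝ (Fin n)) w Bad
        = gaussianPi (0 : EuclideanSpace ℝ (Fin n)) w
          ((fun y : EuclideanSpace ℝ (Fin n) => y j₀) ⁻¹' A) := by
      rw [hgdens (0 : EuclideanSpace ℝ (Fin n)), withDensity_apply _ hBadmeas,
        withDensity_apply _ hpre,
        ← lintegral_indicator hBadmeas, ← lintegral_indicator hpre,
        ← (b.measurePreserving_repr_symm).lintegral_comp
          ((hgmeas (0 : EuclideanSpace ℝ (Fin n))).indicator hBadmeas)]
      apply lintegral_congr
      intro y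
      have hmem : b.repr.symm y ∈ Bad ↔
          y ∈ (fun y : EuclideanSpace ℝ (Fin n) => y j₀) ⁻¹' A := by
        simp only [hBad_def, hA_def, Set.mem_setOf_eq, Set.mem_preimage]
        rw [hkey y, abs_mul, abs_of_pos hvn]
      have hval : g (0 : EuclideanSpace ℝ (Fin n)) (b.repr.symm y)
          = g (0 : EuclideanSpace ℝ (Fin n)) y := by
        rw [hg_def]
        simp only
        rw [sub_zero, sub_zero, LinearIsometryEquiv.norm_map]
      by_cases hy : y ∈ (fun y : EuclideanSpace ℝ (Fin n) => y j₀) ⁻¹' A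
      · rw [Set.indicator_of_mem (hmem.mpr hy), Set.indicator_of_mem hy, hval]
      · rw [Set.indicator_of_notMem (fun h => hy (hmem.mp h)), Set.indicator_of_notMem hy]
    have hstep2 : gaussianPi (0 : EuclideanSpace ℝ (Fin n)) w
        ((fun y : EuclideanSpace ℝ (Fin n) => y j₀) ⁻¹' A) = gaussianReal 0 w A := by
      have h := gaussianPi_cylinder (0 : EuclideanSpace ℝ (Fin n)) w j₀ A hAmeas
      exact h
    have hstep3 : gaussianReal 0 w A ≤ ENNReal.ofReal δ := by
      have hmap := gaussianReal_map_const_mul (μ := 0) (v := w) σ⁻¹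
      have hone : gaussianReal (σ⁻¹ * 0) (NNReal.mk ((σ⁻¹)^2) (sq_nonneg σ⁻¹) * w : ℝ≥0)
          = gaussianReal 0 1 := by
        congr 1
        · simp
        · apply NNReal.coe_injective
          rw [NNReal.coe_mul, NNReal.coe_mk, hwr, NNReal.coe_one]
          field_simp
      rw [hone] at hmap
      set t : ℝ := ε * σ / ‖v‖ - ‖v‖ / (2 * σ) with ht_def
      have htmeas : MeasurableSet {z : ℝ | t < |z|} :=
        measurableSet_lt measurable_const measurable_abs
      have hApre : (fun s : ℝ => σ⁻¹ * s) ⁻¹' {z : ℝ | t < |z|} = A := by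
        ext s
        simp only [Set.mem_preimage, Set.mem_setOf_eq, hA_def]
        rw [abs_mul, abs_inv, abs_of_pos hσ]
        have h1 : t = (ε*σ^2 - ‖v‖^2/2) / (σ * ‖v‖) := by
          rw [ht_def]
          field_simp
        rw [h1, inv_mul_eq_div, div_lt_div_iff₀ (by positivity) hσ,
          show |s| * (σ * ‖v‖) = (‖v‖ * |s|) * σ by ring, mul_lt_mul_iff_left₀ hσ]
      calc gaussianReal 0 w A
          = gaussianReal 0 1 {z : ℝ | t < |z|} := by
            rw [← hmap, Measure.map_apply (measurable_const_mul _) htmeas, hApre]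
        _ ≤ ENNReal.ofReal δ := htail
    rw [hstep1, hstep2]
    exact hstep3
  calc gaussianPi (0 : EuclideanSpace ℝ (Fin n)) w S
      ≤ gaussianPi (0 : EuclideanSpace ℝ (Fin n)) w (S ∩ G)
        + gaussianPi (0 : EuclideanSpace ℝ (Fin n)) w (S \ G) :=
        measure_le_inter_add_diff _ _ _
    _ ≤ ENNReal.ofReal (Real.exp ε) * gaussianPi (-v) w (S ∩ G) + ENNReal.ofReal δ :=
        add_le_add hgood ((measure_mono hsub).trans hbad)
    _ ≤ ENNReal.ofReal (Real.exp ε) * gaussianPi (-v) w S + ENNReal.ofReal δ :=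
        add_le_add_left (mul_le_mul_right (measure_mono Set.inter_subset_left) _) _
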